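/- For every pair of positive integers b and d, there exists a tree T with diameter at least 3 such that γ_{t,coi}(T) - (|V(T)| - β(T)) = b and (|V(T)| - |L(T)|) - γ_{t,coi}(T) = d. -/

import Mathlib

open scoped Classical


/-- A set `D` is a total co-independent dominating set of `G`:
it is a total dominating set and its complement is a nonempty independent set. -/
def TotalCoIndep {V : Type*} [Fintype V] (G : SimpleGraph V) (D : Finset V) : Prop :=
  (∀ v : V, ∃ u ∈ D, G.Adj v u) ∧
  (Dᶜ : Finset V).Nonempty ∧
  ∀ u ∈ (Dᶜ : Finset V), ∀ w ∈ (Dᶜ : Finset V), ¬ G.Adj u w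

/-- The total co-independent domination number. -/
noncomputable def gammaTcoi {V : Type*} [Fintype V] (G : SimpleGraph V) : ℕ :=
  sInf {k | ∃ D : Finset V, TotalCoIndep G D ∧ D.card = k}

/-- A finite set of vertices is independent. -/
def IsIndepF {V : Type*} (G : SimpleGraph V) (B : Finset V) : Prop :=
  ∀ u ∈ B, ∀ w ∈ B, ¬ G.Adj u w

/-- The independence number. -/
noncomputable def indepNum {V : Type*} [Fintype V] (G : SimpleGraph V) : ℕ :=
  sSup {k | ∃ B : Finset V, IsIndepF G B ∧ B.card = k}

/-- A leaf: a vertex with exactly one neighbor (degree one). -/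
def IsLeaf {V : Type*} (G : SimpleGraph V) (v : V) : Prop :=
  ∃! u, G.Adj v u

/-- The set of leaves. -/
noncomputable def leaves {V : Type*} [Fintype V] (G : SimpleGraph V) : Finset V :=
  Finset.univ.filter (fun v => IsLeaf G v)

/-- A support vertex: a non-leaf adjacent to a leaf. -/
def IsSupport {V : Type*} (G : SimpleGraph V) (v : V) : Prop :=
  ¬ IsLeaf G v ∧ ∃ u, G.Adj v u ∧ IsLeaf G u

/-- A semi-support vertex: a non-leaf, non-support vertex adjacent to a support vertex. -/
def IsSemiSupport {V : Type*} (G : SimpleGraph V) (v : V) : Prop :=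
  ¬ IsLeaf G v ∧ ¬ IsSupport G v ∧ ∃ u, G.Adj v u ∧ IsSupport G u

/-- An isolated support vertex: a support vertex with no support vertex as neighbor. -/
def IsIsolatedSupport {V : Type*} (G : SimpleGraph V) (v : V) : Prop :=
  IsSupport G v ∧ ∀ u, G.Adj v u → ¬ IsSupport G u


namespace Stmt17


/-- distance lower bound via a potential function -/
lemma pot_le_walk {α : Type*} (G : SimpleGraph α) (f : α → ℕ)
    (hf : ∀ u v, G.Adj u v → f v ≤ f u + 1) :
    ∀ {x y : α} (w : G.Walk x y), f y ≤ f x + w.length := by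
  intro x y w
  induction w with
  | nil => simp
  | cons h w ih =>
    calc f _ ≤ _ + w.length := ih
    _ ≤ _ := by
      have := hf _ _ h
      rw [SimpleGraph.Walk.length_cons]; omega

lemma dist_ge {α : Type*} (G : SimpleGraph α) (f : α → ℕ)
    (hf : ∀ u v, G.Adj u v → f v ≤ f u + 1) (x y : α) (h : G.Reachable x y) :
    f y ≤ f x + G.dist x y := by
  obtain ⟨w, hw⟩ := h.exists_walk_length_eq_dist
  rw [← hw]
  exact pot_le_walk G f hf w

/-- A graph whose adjacency comes from strictly depth-decreasing parent pointers is acyclic. -/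
lemma forest_acyclic {α : Type*} (G : SimpleGraph α) (par : α → α) (dep : α → ℕ)
    (H : ∀ u v, G.Adj u v → (par u = v ∧ dep u = dep v + 1) ∨ (par v = u ∧ dep v = dep u + 1)) :
    G.IsAcyclic := by
  intro v₀ c₀ hc₀
  -- pick a vertex of maximal depth on the cycle
  obtain ⟨w, hw, hmax⟩ := (c₀.support.toFinset).exists_max_image dep
    ⟨v₀, by simp [SimpleGraph.Walk.start_mem_support]⟩
  simp only [List.mem_toFinset] at hw
  have hmax' : ∀ u ∈ c₀.support, dep u ≤ dep w := fun u hu => hmax u (by simpa using hu)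
  set c := c₀.rotate w hw with hcdef
  have hc : c.IsCycle := hc₀.rotate hw
  have hsupp : ∀ u ∈ c.support, dep u ≤ dep w := by
    intro u hu
    have : u ∈ c₀.support := by
      rcases (SimpleGraph.Walk.mem_support_iff _).1 hu with rfl | h
      · exact hw
      · have := (SimpleGraph.Walk.support_rotate c₀ w hw).mem_iff.1 h
        exact List.mem_of_mem_tail this
    exact hmax' u this
  -- every neighbor of w along the cycle is its parent
  have hpar : ∀ u ∈ c.support, G.Adj w u → par w = u := by
    intro u hu hadj
    rcases H w u hadj with ⟨h1, _⟩ | ⟨_, h2⟩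
    · exact h1
    · exact absurd (hsupp u hu) (by omega)
  -- first vertex after w
  obtain ⟨u₀, ha0, t, hct⟩ := SimpleGraph.Walk.not_nil_iff.mp hc.not_nil
  have hu₀mem : u₀ ∈ c.support := by
    rw [hct]; simp [SimpleGraph.Walk.support_cons, SimpleGraph.Walk.start_mem_support]
  have hpar1 : par w = u₀ := hpar u₀ hu₀mem ha0
  -- last dart
  have hlen : 3 ≤ c.length := hc.three_le_length
  have hdne : c.darts ≠ [] := by
    intro h
    have := congrArg List.length h
    simp only [SimpleGraph.Walk.length_darts, List.length_nil] at this
    omega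
  set d := c.darts.getLast hdne with hd
  have hdsnd : d.snd = w := by rw [hd, SimpleGraph.Walk.getLast_darts_eq_lastDart]; rfl
  have hdfst_mem : d.fst ∈ c.support :=
    SimpleGraph.Walk.dart_fst_mem_support_of_mem_darts _ (List.getLast_mem hdne)
  have hadj2 : G.Adj w d.fst := by
    have h2 := d.adj
    rw [hdsnd] at h2
    exact h2.symm
  have hpar2 : par w = d.fst := hpar d.fst hdfst_mem hadj2
  have hdfst : d.fst = u₀ := by rw [← hpar2, hpar1]
  -- derive duplicate edge
  have hene : c.edges ≠ [] := by
    intro h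
    have := congrArg List.length h
    simp only [SimpleGraph.Walk.length_edges, List.length_nil] at this
    omega
  have hlast : c.edges.getLast hene = s(u₀, w) := by
    have : c.edges.getLast hene = d.edge := by
      rw [hd]
      have := List.getLast_map (f := SimpleGraph.Dart.edge) (l := c.darts)
      simp only [SimpleGraph.Walk.edges]
      rw [← this]
    rw [this]
    show s(d.fst, d.snd) = s(u₀, w)
    rw [← hdfst, ← hdsnd]
  have hnodup : c.edges.Nodup := hc.isCircuit.isTrail.edges_nodup
  have htne : t.edges ≠ [] := by
    intro h
    have h2 := congrArg List.length h
    have h3 := congrArg SimpleGraph.Walk.length hct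
    simp only [SimpleGraph.Walk.length_edges, List.length_nil,
      SimpleGraph.Walk.length_cons] at h2 h3
    omega
  have hce : c.edges = s(w, u₀) :: t.edges := by rw [hct]; simp
  have hmem : s(w, u₀) ∈ t.edges := by
    have e1 : c.edges.getLast? = some (s(u₀, w)) := by
      rw [List.getLast?_eq_getLast_of_ne_nil hene, hlast]
    have e2 : c.edges.getLast? = t.edges.getLast? := by
      rw [hce]
      obtain ⟨x, xs, hx⟩ := List.exists_cons_of_ne_nil htne
      rw [hx]
      exact List.getLast?_cons_cons
    rw [e2, List.getLast?_eq_getLast_of_ne_nil htne] at e1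
    have h2 : t.edges.getLast htne ∈ t.edges := List.getLast_mem htne
    rw [Option.some_inj.mp e1] at h2
    rwa [Sym2.eq_swap]
  rw [hce] at hnodup
  exact (List.nodup_cons.mp hnodup).1 hmem


inductive Leg | X | S | L deriving DecidableEq
inductive Tl | P | Q | E | F | U deriving DecidableEq
instance : Fintype Leg := ⟨⟨([Leg.X, Leg.S, Leg.L] : Multiset Leg), by decide⟩, fun x => by cases x <;> decide⟩
instance : Fintype Tl := ⟨⟨([Tl.P, Tl.Q, Tl.E, Tl.F, Tl.U] : Multiset Tl), by decide⟩, fun x => by cases x <;> decide⟩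

variable (p q : ℕ)

abbrev Vt := Unit ⊕ (Fin (p+2) × Leg) ⊕ (Fin (q+1) × Tl)

abbrev vC : Vt p q := Sum.inl ()
abbrev vL (i : Fin (p+2)) (t : Leg) : Vt p q := Sum.inr (Sum.inl (i, t))
abbrev vT (j : Fin (q+1)) (t : Tl) : Vt p q := Sum.inr (Sum.inr (j, t))

inductive A : Vt p q → Vt p q → Prop where
  | cx (i) : A (vC p q) (vL p q i .X)
  | xs (i) : A (vL p q i .X) (vL p q i .S)
  | sl (i) : A (vL p q i .S) (vL p q i .L)
  | cp (j : Fin (q+1)) (h : (j : ℕ) = 0) : A (vC p q) (vT p q j .P)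
  | up (j k : Fin (q+1)) (h : (k : ℕ) + 1 = (j : ℕ)) : A (vT p q k .U) (vT p q j .P)
  | pq (j) : A (vT p q j .P) (vT p q j .Q)
  | pe (j) : A (vT p q j .P) (vT p q j .E)
  | qf (j) : A (vT p q j .Q) (vT p q j .F)
  | qu (j) : A (vT p q j .Q) (vT p q j .U)

def G0 : SimpleGraph (Vt p q) where
  Adj a b := A p q a b ∨ A p q b a
  symm := by constructor; intro a b h; tauto
  loopless := by
    constructor; intro v h
    rcases h with h | h <;> cases h <;> simp_all

lemma card_Vt : Fintype.card (Vt p q) = 3*p + 5*q + 12 := by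
  simp [Fintype.card_sum, Fintype.card_prod]
  have h1 : Fintype.card Leg = 3 := rfl
  have h2 : Fintype.card Tl = 5 := rfl
  rw [h1, h2]; ring



variable {p q : ℕ}

def par : Vt p q → Vt p q
  | Sum.inl _ => vC p q
  | Sum.inr (Sum.inl (_, .X)) => vC p q
  | Sum.inr (Sum.inl (i, .S)) => vL p q i .X
  | Sum.inr (Sum.inl (i, .L)) => vL p q i .S
  | Sum.inr (Sum.inr (j, .P)) =>
      if (j : ℕ) = 0 then vC p q else vT p q ⟨(j : ℕ) - 1, by omega⟩ .U
  | Sum.inr (Sum.inr (j, .Q)) => vT p q j .P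
  | Sum.inr (Sum.inr (j, .E)) => vT p q j .P
  | Sum.inr (Sum.inr (j, .F)) => vT p q j .Q
  | Sum.inr (Sum.inr (j, .U)) => vT p q j .Q

def dep : Vt p q → ℕ
  | Sum.inl _ => 0
  | Sum.inr (Sum.inl (_, .X)) => 1
  | Sum.inr (Sum.inl (_, .S)) => 2
  | Sum.inr (Sum.inl (_, .L)) => 3
  | Sum.inr (Sum.inr (j, .P)) => 3 * (j : ℕ) + 1
  | Sum.inr (Sum.inr (j, .Q)) => 3 * (j : ℕ) + 2
  | Sum.inr (Sum.inr (j, .E)) => 3 * (j : ℕ) + 2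
  | Sum.inr (Sum.inr (j, .F)) => 3 * (j : ℕ) + 3
  | Sum.inr (Sum.inr (j, .U)) => 3 * (j : ℕ) + 3

lemma A_par {u v : Vt p q} (h : A p q u v) : par v = u ∧ dep v = dep u + 1 := by
  cases h with
  | cx i => exact ⟨rfl, rfl⟩
  | xs i => exact ⟨rfl, rfl⟩
  | sl i => exact ⟨rfl, rfl⟩
  | cp j h => refine ⟨by simp [par, h], by simp [dep, h]⟩
  | up j k h =>
      constructor
      · simp only [par, show (j : ℕ) ≠ 0 by omega, if_false]
        refine congrArg (fun i => vT p q i Tl.U) (Fin.ext ?_)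
        simp only [Fin.val_mk]
        omega
      · simp only [dep]; omega
  | pq j => exact ⟨rfl, rfl⟩
  | pe j => exact ⟨rfl, rfl⟩
  | qf j => exact ⟨rfl, rfl⟩
  | qu j => exact ⟨rfl, by simp [dep]⟩

lemma par_A {v : Vt p q} (h : v ≠ vC p q) : A p q (par v) v := by
  rcases v with _ | ⟨⟨i, ti⟩ | ⟨j, tj⟩⟩
  · exact absurd rfl h
  · cases ti
    · exact A.cx i
    · exact A.xs i
    · exact A.sl i
  · cases tj
    · by_cases h0 : (j : ℕ) = 0
      · simp only [par, h0, if_true]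
        exact A.cp j h0
      · simp only [par, h0, if_false]
        exact A.up j ⟨(j : ℕ) - 1, by omega⟩ (by simp only [Fin.val_mk]; omega)
    · exact A.pq j
    · exact A.pe j
    · exact A.qf j
    · exact A.qu j

lemma dep_eq_zero {v : Vt p q} (h : dep v = 0) : v = vC p q := by
  rcases v with _ | ⟨⟨i, ti⟩ | ⟨j, tj⟩⟩
  · rfl
  · cases ti <;> simp [dep] at h
  · cases tj <;> simp [dep] at h <;> omega

lemma reach_root (v : Vt p q) : (G0 p q).Reachable v (vC p q) := by
  generalize hn : dep v = n
  induction n using Nat.strong_induction_on generalizing v with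
  | _ n ih =>
    by_cases hv : v = vC p q
    · rw [hv]
    · have hA := par_A hv
      have hp := A_par hA
      have h1 : (G0 p q).Adj v (par v) := Or.inr hA
      refine h1.reachable.trans (ih (dep (par v)) ?_ (par v) rfl)
      omega

lemma G0_connected : (G0 p q).Connected := by
  rw [SimpleGraph.connected_iff]
  refine ⟨fun u v => (reach_root u).trans (reach_root v).symm, ⟨vC p q⟩⟩

lemma G0_acyclic : (G0 p q).IsAcyclic := by
  refine forest_acyclic _ par dep ?_
  rintro u v (h | h)
  · right; exact A_par h
  · left; exact A_par h

lemma G0_isTree : (G0 p q).IsTree := ⟨G0_connected, G0_acyclic⟩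


-- ## neighbor inversion lemmas
lemma nbr_L {i : Fin (p+2)} {u : Vt p q} (h : (G0 p q).Adj (vL p q i .L) u) :
    u = vL p q i .S := by
  rcases h with h | h <;> cases h <;> rfl

lemma nbr_E {j : Fin (q+1)} {u : Vt p q} (h : (G0 p q).Adj (vT p q j .E) u) :
    u = vT p q j .P := by
  rcases h with h | h <;> cases h <;> rfl

lemma nbr_F {j : Fin (q+1)} {u : Vt p q} (h : (G0 p q).Adj (vT p q j .F) u) :
    u = vT p q j .Q := by
  rcases h with h | h <;> cases h <;> rfl

lemma nbr_S {i : Fin (p+2)} {u : Vt p q} (h : (G0 p q).Adj (vL p q i .S) u) :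
    u = vL p q i .X ∨ u = vL p q i .L := by
  rcases h with h | h <;> cases h
  · right; rfl
  · left; rfl

-- ## the minimum total co-independent dominating set
def gD : (Fin (p+2) ⊕ Fin (p+2)) ⊕ (Fin (q+1) ⊕ Fin (q+1)) → Vt p q
  | Sum.inl (Sum.inl i) => vL p q i .X
  | Sum.inl (Sum.inr i) => vL p q i .S
  | Sum.inr (Sum.inl j) => vT p q j .P
  | Sum.inr (Sum.inr j) => vT p q j .Q

lemma gD_inj : Function.Injective (gD (p := p) (q := q)) := by
  rintro ((a|a)|(a|a)) ((b|b)|(b|b)) h <;> simp_all [gD]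

def D0 : Finset (Vt p q) := Finset.univ.map ⟨gD, gD_inj⟩

lemma card_D0 : (D0 (p := p) (q := q)).card = 2*p + 2*q + 6 := by
  rw [D0, Finset.card_map, Finset.card_univ]
  simp [Fintype.card_sum]
  ring

lemma X_mem_D0 (i : Fin (p+2)) : vL p q i .X ∈ D0 :=
  Finset.mem_map.2 ⟨Sum.inl (Sum.inl i), Finset.mem_univ _, rfl⟩
lemma S_mem_D0 (i : Fin (p+2)) : vL p q i .S ∈ D0 :=
  Finset.mem_map.2 ⟨Sum.inl (Sum.inr i), Finset.mem_univ _, rfl⟩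
lemma P_mem_D0 (j : Fin (q+1)) : vT p q j .P ∈ D0 :=
  Finset.mem_map.2 ⟨Sum.inr (Sum.inl j), Finset.mem_univ _, rfl⟩
lemma Q_mem_D0 (j : Fin (q+1)) : vT p q j .Q ∈ D0 :=
  Finset.mem_map.2 ⟨Sum.inr (Sum.inr j), Finset.mem_univ _, rfl⟩

lemma C_not_mem_D0 : vC p q ∉ D0 := by
  rw [D0, Finset.mem_map]
  rintro ⟨((a|a)|(a|a)), -, h⟩ <;> simp [gD] at h

lemma edge_touch {a b : Vt p q} (h : A p q a b) : a ∈ D0 ∨ b ∈ D0 := by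
  cases h with
  | cx i => exact Or.inr (X_mem_D0 i)
  | xs i => exact Or.inl (X_mem_D0 i)
  | sl i => exact Or.inl (S_mem_D0 i)
  | cp j h => exact Or.inr (P_mem_D0 j)
  | up j k h => exact Or.inr (P_mem_D0 j)
  | pq j => exact Or.inl (P_mem_D0 j)
  | pe j => exact Or.inl (P_mem_D0 j)
  | qf j => exact Or.inl (Q_mem_D0 j)
  | qu j => exact Or.inl (Q_mem_D0 j)

lemma TCI_D0 : TotalCoIndep (G0 p q) (D0 (p := p) (q := q)) := by
  refine ⟨?_, ⟨vC p q, by simp only [Finset.mem_compl]; exact C_not_mem_D0⟩, ?_⟩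
  · intro v
    rcases v with _ | ⟨⟨i, ti⟩ | ⟨j, tj⟩⟩
    · exact ⟨vL p q 0 .X, X_mem_D0 0, Or.inl (A.cx 0)⟩
    · cases ti
      · exact ⟨vL p q i .S, S_mem_D0 i, Or.inl (A.xs i)⟩
      · exact ⟨vL p q i .X, X_mem_D0 i, Or.inr (A.xs i)⟩
      · exact ⟨vL p q i .S, S_mem_D0 i, Or.inr (A.sl i)⟩
    · cases tj
      · exact ⟨vT p q j .Q, Q_mem_D0 j, Or.inl (A.pq j)⟩
      · exact ⟨vT p q j .P, P_mem_D0 j, Or.inr (A.pq j)⟩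
      · exact ⟨vT p q j .P, P_mem_D0 j, Or.inr (A.pe j)⟩
      · exact ⟨vT p q j .Q, Q_mem_D0 j, Or.inr (A.qf j)⟩
      · exact ⟨vT p q j .Q, Q_mem_D0 j, Or.inr (A.qu j)⟩
  · intro u hu w hw h
    simp only [Finset.mem_compl] at hu hw
    rcases h with h | h <;> rcases edge_touch h with h' | h' <;> tauto

-- ## lower bound for any total co-independent dominating set
def lbMap (D : Finset (Vt p q)) : (Fin (p+2) ⊕ Fin (p+2)) ⊕ (Fin (q+1) ⊕ Fin (q+1)) → Vt p q
  | Sum.inl (Sum.inl i) => if vL p q i .X ∈ D then vL p q i .X else vL p q i .L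
  | Sum.inl (Sum.inr i) => vL p q i .S
  | Sum.inr (Sum.inl j) => vT p q j .P
  | Sum.inr (Sum.inr j) => vT p q j .Q

lemma lbMap_mem {D : Finset (Vt p q)} (hD : TotalCoIndep (G0 p q) D) :
    ∀ a, lbMap D a ∈ D := by
  rintro ((i|i)|(j|j))
  · simp only [lbMap]
    split_ifs with h
    · exact h
    · obtain ⟨u, hu, hadj⟩ := hD.1 (vL p q i .S)
      rcases nbr_S hadj with rfl | rfl
      · exact absurd hu h
      · exact hu
  · obtain ⟨u, hu, hadj⟩ := hD.1 (vL p q i .L)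
    rw [nbr_L hadj] at hu
    exact hu
  · obtain ⟨u, hu, hadj⟩ := hD.1 (vT p q j .E)
    rw [nbr_E hadj] at hu
    exact hu
  · obtain ⟨u, hu, hadj⟩ := hD.1 (vT p q j .F)
    rw [nbr_F hadj] at hu
    exact hu

lemma lbMap_inj (D : Finset (Vt p q)) : Function.Injective (lbMap D) := by
  rintro ((a|a)|(a|a)) ((b|b)|(b|b)) h <;>
    simp only [lbMap] at h <;> (try split_ifs at h) <;> simp_all

lemma gamma_lower {D : Finset (Vt p q)} (hD : TotalCoIndep (G0 p q) D) :
    2*p + 2*q + 6 ≤ D.card := by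
  have h := Finset.card_le_card_of_injOn (s := Finset.univ) (t := D) (lbMap D)
    (fun a _ => lbMap_mem hD a) ((lbMap_inj D).injOn)
  rw [Finset.card_univ] at h
  refine le_trans (le_of_eq ?_) h
  simp [Fintype.card_sum]
  ring

lemma gamma_G0 : gammaTcoi (G0 p q) = 2*p + 2*q + 6 := by
  refine le_antisymm (Nat.sInf_le ⟨D0, TCI_D0, card_D0⟩) (le_csInf ⟨_, D0, TCI_D0, card_D0⟩ ?_)
  rintro k ⟨D, hD, rfl⟩
  exact gamma_lower hD


-- ## independence number
def cls : Vt p q → (Fin (p+2) × Bool) ⊕ (Fin (q+1) × Fin 3)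
  | Sum.inl _ => Sum.inl (0, false)
  | Sum.inr (Sum.inl (i, .X)) => Sum.inl (i, false)
  | Sum.inr (Sum.inl (i, .S)) => if i = 0 then Sum.inl (0, true) else Sum.inl (i, false)
  | Sum.inr (Sum.inl (i, .L)) => Sum.inl (i, true)
  | Sum.inr (Sum.inr (j, .P)) => Sum.inr (j, 0)
  | Sum.inr (Sum.inr (j, .E)) => Sum.inr (j, 0)
  | Sum.inr (Sum.inr (j, .Q)) => Sum.inr (j, 1)
  | Sum.inr (Sum.inr (j, .F)) => Sum.inr (j, 1)
  | Sum.inr (Sum.inr (j, .U)) => Sum.inr (j, 2)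

lemma cls_adj {u w : Vt p q} (h : cls u = cls w) (hne : u ≠ w) : (G0 p q).Adj u w := by
  rcases u with _ | ⟨⟨i, ti⟩ | ⟨j, tj⟩⟩ <;>
    rcases w with _ | ⟨⟨i', ti'⟩ | ⟨j', tj'⟩⟩ <;>
    first
      | (cases ti <;> cases ti')
      | (cases ti <;> cases tj')
      | (cases tj <;> cases ti')
      | (cases tj <;> cases tj')
      | (cases ti) | (cases ti') | (cases tj) | (cases tj') | skip
  all_goals simp only [cls] at h
  all_goals (try split_ifs at h)
  all_goals simp_all
  all_goals
    first
      | exact Or.inl (A.cx _) | exact Or.inr (A.cx _)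
      | exact Or.inl (A.xs _) | exact Or.inr (A.xs _)
      | exact Or.inl (A.sl _) | exact Or.inr (A.sl _)
      | exact Or.inl (A.pq _) | exact Or.inr (A.pq _)
      | exact Or.inl (A.pe _) | exact Or.inr (A.pe _)
      | exact Or.inl (A.qf _) | exact Or.inr (A.qf _)
      | exact Or.inl (A.qu _) | exact Or.inr (A.qu _)

lemma indep_upper {I : Finset (Vt p q)} (hI : IsIndepF (G0 p q) I) :
    I.card ≤ 2*p + 3*q + 7 := by
  have h := Finset.card_le_card_of_injOn (s := I) (t := Finset.univ) cls
    (fun a _ => Finset.mem_univ _) ?_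
  · rw [Finset.card_univ] at h
    refine le_trans h (le_of_eq ?_)
    simp [Fintype.card_sum, Fintype.card_prod]
    ring
  · intro u hu w hw hc
    by_contra hne
    exact hI u hu w hw (cls_adj hc hne)

def iota : (Fin (p+2) × Bool) ⊕ (Fin (q+1) × Leg) → Vt p q
  | Sum.inl (i, false) => vL p q i .X
  | Sum.inl (i, true) => vL p q i .L
  | Sum.inr (j, .X) => vT p q j .E
  | Sum.inr (j, .S) => vT p q j .F
  | Sum.inr (j, .L) => vT p q j .U

lemma iota_inj : Function.Injective (iota (p := p) (q := q)) := by
  rintro (⟨a, (_|_)⟩ | ⟨a, ta⟩) (⟨b, (_|_)⟩ | ⟨b, tb⟩) h <;>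
    first
      | (cases ta <;> cases tb) | (cases ta) | (cases tb) | skip
  all_goals simp_all [iota]

def I0 : Finset (Vt p q) := Finset.univ.map ⟨iota, iota_inj⟩

lemma card_I0 : (I0 (p := p) (q := q)).card = 2*p + 3*q + 7 := by
  rw [I0, Finset.card_map, Finset.card_univ]
  have h1 : Fintype.card Leg = 3 := rfl
  simp [Fintype.card_sum, Fintype.card_prod, h1]
  ring

lemma C_not_mem_I0 : vC p q ∉ I0 := by
  rw [I0, Finset.mem_map]
  rintro ⟨(⟨a, (_|_)⟩ | ⟨a, (_|_|_)⟩), -, h⟩ <;> simp [iota] at h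

lemma S_not_mem_I0 (i : Fin (p+2)) : vL p q i .S ∉ I0 := by
  rw [I0, Finset.mem_map]
  rintro ⟨(⟨a, (_|_)⟩ | ⟨a, (_|_|_)⟩), -, h⟩ <;> simp [iota] at h

lemma P_not_mem_I0 (j : Fin (q+1)) : vT p q j .P ∉ I0 := by
  rw [I0, Finset.mem_map]
  rintro ⟨(⟨a, (_|_)⟩ | ⟨a, (_|_|_)⟩), -, h⟩ <;> simp [iota] at h

lemma Q_not_mem_I0 (j : Fin (q+1)) : vT p q j .Q ∉ I0 := by
  rw [I0, Finset.mem_map]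
  rintro ⟨(⟨a, (_|_)⟩ | ⟨a, (_|_|_)⟩), -, h⟩ <;> simp [iota] at h

lemma indep_I0 : IsIndepF (G0 p q) (I0 (p := p) (q := q)) := by
  intro u hu w hw hadj
  rcases hadj with h | h <;> cases h
  case cx i => exact C_not_mem_I0 hu
  case xs i => exact S_not_mem_I0 i hw
  case sl i => exact S_not_mem_I0 i hu
  case cp j hj => exact C_not_mem_I0 hu
  case up j k hk => exact P_not_mem_I0 j hw
  case pq j => exact P_not_mem_I0 j hu
  case pe j => exact P_not_mem_I0 j hu
  case qf j => exact Q_not_mem_I0 j hu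
  case qu j => exact Q_not_mem_I0 j hu
  case inr.cx i => exact C_not_mem_I0 hw
  case inr.xs i => exact S_not_mem_I0 i hu
  case inr.sl i => exact S_not_mem_I0 i hw
  case inr.cp j hj => exact C_not_mem_I0 hw
  case inr.up j k hk => exact P_not_mem_I0 j hu
  case inr.pq j => exact P_not_mem_I0 j hw
  case inr.pe j => exact P_not_mem_I0 j hw
  case inr.qf j => exact Q_not_mem_I0 j hw
  case inr.qu j => exact Q_not_mem_I0 j hw

lemma indepNum_G0 : indepNum (G0 p q) = 2*p + 3*q + 7 := by
  have hmem : (2*p + 3*q + 7) ∈ {k | ∃ B : Finset (Vt p q), IsIndepF (G0 p q) B ∧ B.card = k} :=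
    ⟨I0, indep_I0, card_I0⟩
  have hub : ∀ k ∈ {k | ∃ B : Finset (Vt p q), IsIndepF (G0 p q) B ∧ B.card = k},
      k ≤ 2*p + 3*q + 7 := by
    rintro k ⟨I, hI, rfl⟩
    exact indep_upper hI
  exact le_antisymm (csSup_le ⟨_, hmem⟩ hub) (le_csSup ⟨_, hub⟩ hmem)


-- ## leaves
lemma nbr_U {j : Fin (q+1)} {u : Vt p q} (h : (G0 p q).Adj (vT p q j .U) u) :
    u = vT p q j .Q ∨ ∃ j' : Fin (q+1), (j : ℕ) + 1 = (j' : ℕ) ∧ u = vT p q j' .P := by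
  rcases h with h | h <;> cases h
  · exact Or.inr ⟨_, by omega, rfl⟩
  · exact Or.inl rfl

lemma nbr_X {i : Fin (p+2)} {u : Vt p q} (h : (G0 p q).Adj (vL p q i .X) u) :
    u = vC p q ∨ u = vL p q i .S := by
  rcases h with h | h <;> cases h
  · exact Or.inr rfl
  · exact Or.inl rfl

def lam : Fin (p+2) ⊕ ((Fin (q+1) × Bool) ⊕ Unit) → Vt p q
  | Sum.inl i => vL p q i .L
  | Sum.inr (Sum.inl (j, true)) => vT p q j .E
  | Sum.inr (Sum.inl (j, false)) => vT p q j .F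
  | Sum.inr (Sum.inr _) => vT p q (Fin.last q) .U

lemma lam_inj : Function.Injective (lam (p := p) (q := q)) := by
  rintro (a | ⟨⟨a, (_|_)⟩ | a⟩) (b | ⟨⟨b, (_|_)⟩ | b⟩) h <;> simp_all [lam]

def L0 : Finset (Vt p q) := Finset.univ.map ⟨lam, lam_inj⟩

lemma card_L0 : (L0 (p := p) (q := q)).card = p + 2*q + 5 := by
  rw [L0, Finset.card_map, Finset.card_univ]
  simp [Fintype.card_sum, Fintype.card_prod]
  ring

lemma L_mem_L0 (i : Fin (p+2)) : vL p q i .L ∈ L0 :=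
  Finset.mem_map.2 ⟨Sum.inl i, Finset.mem_univ _, rfl⟩
lemma E_mem_L0 (j : Fin (q+1)) : vT p q j .E ∈ L0 :=
  Finset.mem_map.2 ⟨Sum.inr (Sum.inl (j, true)), Finset.mem_univ _, rfl⟩
lemma F_mem_L0 (j : Fin (q+1)) : vT p q j .F ∈ L0 :=
  Finset.mem_map.2 ⟨Sum.inr (Sum.inl (j, false)), Finset.mem_univ _, rfl⟩
lemma U_mem_L0 : vT p q (Fin.last q) .U ∈ L0 :=
  Finset.mem_map.2 ⟨Sum.inr (Sum.inr ()), Finset.mem_univ _, rfl⟩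

lemma two_nbrs_not_leaf {v a b : Vt p q} (ha : (G0 p q).Adj v a) (hb : (G0 p q).Adj v b)
    (hab : a ≠ b) : ¬ IsLeaf (G0 p q) v := by
  rintro ⟨u, -, huniq⟩
  exact hab ((huniq a ha).trans (huniq b hb).symm)

lemma isLeaf_iff (v : Vt p q) : IsLeaf (G0 p q) v ↔ v ∈ L0 := by
  constructor
  · intro hv
    rcases v with _ | ⟨⟨i, ti⟩ | ⟨j, tj⟩⟩
    · exact absurd hv (two_nbrs_not_leaf (Or.inl (A.cx 0)) (Or.inl (A.cx 1)) (by simp))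
    · cases ti
      · exact absurd hv (two_nbrs_not_leaf (Or.inr (A.cx i)) (Or.inl (A.xs i)) (by simp))
      · exact absurd hv (two_nbrs_not_leaf (Or.inr (A.xs i)) (Or.inl (A.sl i)) (by simp))
      · exact L_mem_L0 i
    · cases tj
      · exact absurd hv (two_nbrs_not_leaf (Or.inl (A.pq j)) (Or.inl (A.pe j)) (by simp))
      · exact absurd hv (two_nbrs_not_leaf (Or.inr (A.pq j)) (Or.inl (A.qf j)) (by simp))
      · exact E_mem_L0 j
      · exact F_mem_L0 j
      · by_cases hj : j = Fin.last q
        · rw [hj]; exact U_mem_L0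
        · have hlt : (j : ℕ) < q := by
            have := j.isLt
            have : (j : ℕ) ≠ q := fun hc => hj (Fin.ext hc)
            omega
          refine absurd hv (two_nbrs_not_leaf (Or.inr (A.qu j))
            (Or.inl (A.up ⟨(j : ℕ) + 1, by omega⟩ j (by simp))) (by simp))
  · intro hv
    rw [L0, Finset.mem_map] at hv
    obtain ⟨a, -, rfl⟩ := hv
    rcases a with i | ⟨⟨j, (_|_)⟩ | a⟩
    · exact ⟨vL p q i .S, Or.inr (A.sl i), fun y hy => nbr_L hy⟩
    · exact ⟨vT p q j .Q, Or.inr (A.qf j), fun y hy => nbr_F hy⟩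
    · exact ⟨vT p q j .P, Or.inr (A.pe j), fun y hy => nbr_E hy⟩
    · refine ⟨vT p q (Fin.last q) .Q, Or.inr (A.qu _), fun y hy => ?_⟩
      rcases nbr_U hy with rfl | ⟨j', hj', rfl⟩
      · rfl
      · exfalso
        have := j'.isLt
        simp [Fin.last] at hj'
        omega

lemma leaves_G0 : leaves (G0 p q) = L0 := by
  ext v
  rw [leaves, Finset.mem_filter]
  constructor
  · rintro ⟨-, h⟩
    exact (isLeaf_iff v).1 h
  · intro h
    exact ⟨Finset.mem_univ _, (isLeaf_iff v).2 h⟩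


-- ## transport along an equivalence
section Transport
variable {α β : Type*} [Fintype α] [Fintype β]

lemma TCI_map (e : α ≃ β) (G : SimpleGraph α) (H : SimpleGraph β)
    (hGH : ∀ a b, G.Adj a b ↔ H.Adj (e a) (e b)) {D : Finset α}
    (hD : TotalCoIndep G D) : TotalCoIndep H (D.map e.toEmbedding) := by
  obtain ⟨hdom, ⟨z, hz⟩, hind⟩ := hD
  simp only [Finset.mem_compl] at hz
  refine ⟨?_, ⟨e z, ?_⟩, ?_⟩
  · intro v
    obtain ⟨u, hu, hadj⟩ := hdom (e.symm v)
    refine ⟨e u, Finset.mem_map_of_mem _ hu, ?_⟩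
    have h2 := (hGH _ _).1 hadj
    simpa using h2
  · simp only [Finset.mem_compl, Finset.mem_map_equiv]
    simpa using hz
  · intro u hu w hw hadj
    simp only [Finset.mem_compl, Finset.mem_map_equiv] at hu hw
    refine hind (e.symm u) ?_ (e.symm w) ?_ ((hGH _ _).2 (by simpa using hadj))
    · simp only [Finset.mem_compl]; exact hu
    · simp only [Finset.mem_compl]; exact hw

lemma gamma_transfer (e : α ≃ β) (G : SimpleGraph α) (H : SimpleGraph β)
    (hGH : ∀ a b, G.Adj a b ↔ H.Adj (e a) (e b)) : gammaTcoi G = gammaTcoi H := by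
  have hGH' : ∀ a b, H.Adj a b ↔ G.Adj (e.symm a) (e.symm b) := fun a b => by
    rw [hGH (e.symm a) (e.symm b), Equiv.apply_symm_apply, Equiv.apply_symm_apply]
  unfold gammaTcoi
  congr 1
  ext k
  constructor
  · rintro ⟨D, hD, rfl⟩
    exact ⟨D.map e.toEmbedding, TCI_map e G H hGH hD, by simp⟩
  · rintro ⟨D, hD, rfl⟩
    exact ⟨D.map e.symm.toEmbedding, TCI_map e.symm H G hGH' hD, by simp⟩

lemma indep_map (e : α ≃ β) (G : SimpleGraph α) (H : SimpleGraph β)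
    (hGH : ∀ a b, G.Adj a b ↔ H.Adj (e a) (e b)) {I : Finset α}
    (hI : IsIndepF G I) : IsIndepF H (I.map e.toEmbedding) := by
  intro u hu w hw hadj
  rw [Finset.mem_map_equiv] at hu hw
  exact hI (e.symm u) hu (e.symm w) hw ((hGH _ _).2 (by simpa using hadj))

lemma indepNum_transfer (e : α ≃ β) (G : SimpleGraph α) (H : SimpleGraph β)
    (hGH : ∀ a b, G.Adj a b ↔ H.Adj (e a) (e b)) : indepNum G = indepNum H := by
  have hGH' : ∀ a b, H.Adj a b ↔ G.Adj (e.symm a) (e.symm b) := fun a b => by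
    rw [hGH (e.symm a) (e.symm b), Equiv.apply_symm_apply, Equiv.apply_symm_apply]
  unfold indepNum
  congr 1
  ext k
  constructor
  · rintro ⟨I, hI, rfl⟩
    exact ⟨I.map e.toEmbedding, indep_map e G H hGH hI, by simp⟩
  · rintro ⟨I, hI, rfl⟩
    exact ⟨I.map e.symm.toEmbedding, indep_map e.symm H G hGH' hI, by simp⟩

lemma isLeaf_transfer (e : α ≃ β) (G : SimpleGraph α) (H : SimpleGraph β)
    (hGH : ∀ a b, G.Adj a b ↔ H.Adj (e a) (e b)) (a : α) :
    IsLeaf G a ↔ IsLeaf H (e a) := by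
  constructor
  · rintro ⟨u, hu, huniq⟩
    refine ⟨e u, (hGH a u).1 hu, fun y hy => ?_⟩
    have h2 : G.Adj a (e.symm y) := (hGH _ _).2 (by simpa using hy)
    have h3 := huniq (e.symm y) h2
    rw [← Equiv.apply_symm_apply e y, h3]
  · rintro ⟨u, hu, huniq⟩
    refine ⟨e.symm u, (hGH _ _).2 (by simpa using hu), fun y hy => ?_⟩
    have h3 := huniq (e y) ((hGH a y).1 hy)
    rw [← Equiv.symm_apply_apply e y, h3]

lemma leaves_transfer (e : α ≃ β) (G : SimpleGraph α) (H : SimpleGraph β)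
    (hGH : ∀ a b, G.Adj a b ↔ H.Adj (e a) (e b)) :
    (leaves H) = (leaves G).map e.toEmbedding := by
  ext v
  rw [Finset.mem_map_equiv, leaves, leaves, Finset.mem_filter, Finset.mem_filter]
  have h := isLeaf_transfer e G H hGH (e.symm v)
  rw [Equiv.apply_symm_apply] at h
  constructor
  · rintro ⟨-, h2⟩
    exact ⟨Finset.mem_univ _, h.2 h2⟩
  · rintro ⟨-, h2⟩
    exact ⟨Finset.mem_univ _, h.1 h2⟩

end Transport

end Stmt17

theorem stmt17 (b d : ℕ) (hb : 0 < b) (hd : 0 < d) :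
    ∃ (n : ℕ) (T : SimpleGraph (Fin n)), T.IsTree ∧ (∃ x y : Fin n, 3 ≤ T.dist x y) ∧
      gammaTcoi T - (n - indepNum T) = b ∧
      (n - (leaves T).card) - gammaTcoi T = d := by
  open Stmt17 in
  obtain ⟨p, rfl⟩ : ∃ p, b = p + 1 := ⟨b - 1, by omega⟩
  obtain ⟨q, rfl⟩ : ∃ q, d = q + 1 := ⟨d - 1, by omega⟩
  set n := 3*p + 5*q + 12 with hn
  have hcard : Fintype.card (Vt p q) = n := card_Vt p q
  let e : Fin n ≃ Vt p q := (Fintype.equivFinOfCardEq hcard).symm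
  let T : SimpleGraph (Fin n) := (G0 p q).comap ⇑e
  have hGH : ∀ a b, T.Adj a b ↔ (G0 p q).Adj (e a) (e b) := fun _ _ => Iff.rfl
  have hconn : T.Connected := by
    rw [SimpleGraph.connected_iff]
    constructor
    · intro u v
      have hr : (G0 p q).Reachable (e u) (e v) := G0_connected.preconnected _ _
      let ψ : (G0 p q) →g T :=
        ⟨⇑e.symm, fun {a c} h => by
          show (G0 p q).Adj (e (e.symm a)) (e (e.symm c))
          simpa using h⟩
      have h2 := hr.map ψ
      have h3 : ψ (e u) = u := e.symm_apply_apply u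
      have h4 : ψ (e v) = v := e.symm_apply_apply v
      rwa [h3, h4] at h2
    · exact ⟨⟨0, by omega⟩⟩
  have hacyc : T.IsAcyclic := by
    intro v c hc
    let φ : T →g (G0 p q) := ⟨⇑e, fun {a c} h => h⟩
    exact G0_acyclic (c.map φ)
      ((SimpleGraph.Walk.map_isCycle_iff_of_injective (by exact e.injective)).2 hc)
  have hpot : ∀ u v : Fin n, T.Adj u v → dep (e v) ≤ dep (e u) + 1 := by
    intro u v h
    rcases h with h | h
    · have := (A_par h).2; omega
    · have := (A_par h).2; omega
  have hdist : 3 ≤ T.dist (e.symm (vC p q)) (e.symm (vL p q 0 .L)) := by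
    have hr : T.Reachable (e.symm (vC p q)) (e.symm (vL p q 0 .L)) :=
      hconn.preconnected _ _
    have h := dist_ge T (fun x => dep (e x)) hpot _ _ hr
    simp only [Equiv.apply_symm_apply] at h
    have h0 : dep (vC p q) = 0 := rfl
    have h3 : dep (vL p q 0 .L) = 3 := rfl
    omega
  have hg : gammaTcoi T = 2*p + 2*q + 6 := by
    rw [gamma_transfer e T (G0 p q) hGH]
    exact gamma_G0
  have hi : indepNum T = 2*p + 3*q + 7 := by
    rw [indepNum_transfer e T (G0 p q) hGH]
    exact indepNum_G0
  have hl : (leaves T).card = p + 2*q + 5 := by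
    have h := leaves_transfer e T (G0 p q) hGH
    have h2 : (leaves (G0 p q)).card = (leaves T).card := by rw [h, Finset.card_map]
    rw [← h2, leaves_G0, card_L0]
  refine ⟨n, T, ⟨hconn, hacyc⟩, ⟨_, _, hdist⟩, ?_, ?_⟩
  · rw [hg, hi]; omega
  · rw [hg, hl]; omega
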